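/- Let m ≥ 2 be an integer, let n > 10 be an integer with n ≡ 2 (mod 4), and let a be the smallest divisor of n that is greater than 2. Then (1 + α(m))·( ((n/a)!)^a·a!/2 )^m ≤ (1/2^{m−1})·((n/2 − 1)!)²·((n/2)!)^{2m−2}, as an inequality of real numbers. -/

import Mathlib

/-- `alpha m` = α(m): the number of distinct prime divisors of `m`. -/
def alpha (m : ℕ) : ℕ := m.primeFactors.card

private lemma lem49 : ∀ d : ℕ, 3 ≤ d → 4 ^ d ≤ 2 * 9 ^ (d - 1) := by
  intro d hd
  induction d, hd using Nat.le_induction with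
  | base => norm_num
  | succ d hd ih =>
    have h1 : d + 1 - 1 = (d - 1) + 1 := by omega
    rw [h1, pow_succ, pow_succ]
    calc 4 ^ d * 4 ≤ (2 * 9 ^ (d - 1)) * 4 := Nat.mul_le_mul_right _ ih
      _ ≤ 2 * (9 ^ (d - 1) * 9) := by ring_nf; omega

private lemma fact_two : ∀ e : ℕ,
    (Nat.factorial (2 * e + 6)) ^ 3 * 6 ≤ 2 * (Nat.factorial (3 * e + 8)) ^ 2 := by
  intro e
  induction e with
  | zero => norm_num [Nat.factorial]
  | succ e ih =>
    have h1 : 2 * (e + 1) + 6 = (2 * e + 6) + 2 := by ring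
    have h2 : 3 * (e + 1) + 8 = (3 * e + 8) + 3 := by ring
    rw [h1, h2]
    set x := 2 * e + 6 with hx
    set y := 3 * e + 8 with hy
    have hfx : Nat.factorial (x + 2) = (x + 2) * (x + 1) * Nat.factorial x := by
      rw [show x + 2 = (x + 1) + 1 from rfl, Nat.factorial_succ, Nat.factorial_succ]; ring
    have hfy : Nat.factorial (y + 3) = (y + 3) * (y + 2) * (y + 1) * Nat.factorial y := by
      rw [show y + 3 = ((y + 1) + 1) + 1 from rfl, Nat.factorial_succ, Nat.factorial_succ,
        Nat.factorial_succ]; ring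
    have hkey : ((x + 2) * (x + 1)) ^ 3 ≤ ((y + 3) * (y + 2) * (y + 1)) ^ 2 := by
      calc ((x + 2) * (x + 1)) ^ 3 ≤ ((x + 2) * (x + 2)) ^ 3 := by
            exact Nat.pow_le_pow_left (Nat.mul_le_mul_left _ (by omega)) 3
        _ = (x + 2) ^ 6 := by ring
        _ ≤ (y + 1) ^ 6 := Nat.pow_le_pow_left (by omega) 6
        _ = ((y + 1) * (y + 1) * (y + 1)) ^ 2 := by ring
        _ ≤ ((y + 3) * (y + 2) * (y + 1)) ^ 2 := by
            exact Nat.pow_le_pow_left (by nlinarith) 2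
    calc Nat.factorial (x + 2) ^ 3 * 6
        = ((x + 2) * (x + 1)) ^ 3 * (Nat.factorial x ^ 3 * 6) := by rw [hfx]; ring
      _ ≤ ((y + 3) * (y + 2) * (y + 1)) ^ 2 * (2 * Nat.factorial y ^ 2) :=
          Nat.mul_le_mul hkey ih
      _ = 2 * Nat.factorial (y + 3) ^ 2 := by rw [hfy]; ring

private lemma core_big : ∀ a : ℕ, 3 ≤ a → ∀ d : ℕ, 3 ≤ d →
    (Nat.factorial (2 * d)) ^ a * Nat.factorial a ≤ 2 * (Nat.factorial (a * d - 1)) ^ 2 := by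
  intro a ha
  induction a, ha using Nat.le_induction with
  | base =>
    intro d hd
    obtain ⟨e, rfl⟩ : ∃ e, d = e + 3 := ⟨d - 3, by omega⟩
    have h1 : 2 * (e + 3) = 2 * e + 6 := by ring
    have h2 : 3 * (e + 3) - 1 = 3 * e + 8 := by omega
    rw [h1, h2]
    calc Nat.factorial (2 * e + 6) ^ 3 * Nat.factorial 3
        = Nat.factorial (2 * e + 6) ^ 3 * 6 := by norm_num [Nat.factorial]
      _ ≤ 2 * Nat.factorial (3 * e + 8) ^ 2 := fact_two e
  | succ a ha ih =>
    intro d hd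
    have ihd := ih d hd
    obtain ⟨k, hk⟩ : ∃ k, k = a * d := ⟨_, rfl⟩
    rw [← hk] at ihd
    have hk9 : 9 ≤ k := by
      rw [hk]; calc 9 = 3 * 3 := rfl
                    _ ≤ a * d := Nat.mul_le_mul ha hd
    have hsub : (a + 1) * d - 1 = (k - 1) + d := by
      have h : (a + 1) * d = k + d := by rw [hk]; ring
      omega
    rw [hsub]
    -- key multiplier bound : (2d)! * (a+1) ≤ k ^ (2d)
    have hmult : Nat.factorial (2 * d) * (a + 1) ≤ k ^ (2 * d) := by
      have h1 : Nat.factorial (2 * d) ≤ (2 * d) ^ (2 * d) := Nat.factorial_le_pow _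
      have h2 : (2 * d) ^ (2 * d) = 4 ^ d * d ^ (2 * d) := by
        rw [Nat.mul_pow, show (4:ℕ) = 2 ^ 2 from rfl, ← pow_mul]
      have h3 : 4 ^ d ≤ 2 * 9 ^ (d - 1) := lem49 d hd
      have h4 : 9 ^ (d - 1) ≤ a ^ (2 * (d - 1)) := by
        calc 9 ^ (d - 1) = 3 ^ (2 * (d - 1)) := by
              rw [pow_mul]; norm_num
          _ ≤ a ^ (2 * (d - 1)) := Nat.pow_le_pow_left ha _
      have h5 : 2 * (a + 1) ≤ a ^ 2 := by nlinarith
      have h6 : a ^ (2 * (d - 1)) * a ^ 2 = a ^ (2 * d) := by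
        rw [← pow_add]; congr 1; omega
      calc Nat.factorial (2 * d) * (a + 1) ≤ (2 * d) ^ (2 * d) * (a + 1) :=
            Nat.mul_le_mul_right _ h1
        _ = 4 ^ d * d ^ (2 * d) * (a + 1) := by rw [h2]
        _ ≤ (2 * 9 ^ (d - 1)) * d ^ (2 * d) * (a + 1) :=
            Nat.mul_le_mul_right _ (Nat.mul_le_mul_right _ h3)
        _ = 9 ^ (d - 1) * (2 * (a + 1)) * d ^ (2 * d) := by ring
        _ ≤ (a ^ (2 * (d - 1))) * (a ^ 2) * d ^ (2 * d) :=
            Nat.mul_le_mul_right _ (Nat.mul_le_mul h4 h5)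
        _ = a ^ (2 * d) * d ^ (2 * d) := by rw [h6]
        _ = k ^ (2 * d) := by rw [hk]; rw [Nat.mul_pow]
    have hfact : Nat.factorial (k - 1) * k ^ d ≤ Nat.factorial ((k - 1) + d) := by
      have := Nat.factorial_mul_pow_le_factorial (m := k - 1) (n := d)
      rwa [show k - 1 + 1 = k by omega] at this
    calc Nat.factorial (2 * d) ^ (a + 1) * Nat.factorial (a + 1)
        = (Nat.factorial (2 * d) ^ a * Nat.factorial a) *
            (Nat.factorial (2 * d) * (a + 1)) := by
          rw [Nat.factorial_succ, pow_succ]; ring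
      _ ≤ (2 * Nat.factorial (k - 1) ^ 2) * (k ^ (2 * d)) := Nat.mul_le_mul ihd hmult
      _ = 2 * (Nat.factorial (k - 1) * k ^ d) ^ 2 := by
          rw [mul_pow, ← pow_mul, Nat.mul_comm d 2]; ring
      _ ≤ 2 * (Nat.factorial ((k - 1) + d)) ^ 2 := by
          exact Nat.mul_le_mul_left _ (Nat.pow_le_pow_left hfact 2)

private lemma core_small : ∀ e : ℕ,
    2 ^ (e + 7) * Nat.factorial (e + 7) ≤ 2 * (Nat.factorial (e + 6)) ^ 2 := by
  intro e
  induction e with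
  | zero => norm_num [Nat.factorial]
  | succ e ih =>
    have h1 : e + 1 + 7 = (e + 7) + 1 := by ring
    have h2 : e + 1 + 6 = (e + 6) + 1 := by ring
    rw [h1, h2, pow_succ, Nat.factorial_succ, Nat.factorial_succ]
    have hkey : 2 * 2 * (e + 7 + 1) ≤ (e + 6 + 1) ^ 2 := by nlinarith
    calc 2 ^ (e + 7) * 2 * ((e + 7 + 1) * Nat.factorial (e + 7))
        = (2 ^ (e + 7) * Nat.factorial (e + 7)) * (2 * (e + 7 + 1)) := by ring
      _ ≤ (2 * Nat.factorial (e + 6) ^ 2) * (2 * (e + 7 + 1)) :=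
          Nat.mul_le_mul_right _ ih
      _ = (2 * 2 * (e + 7 + 1)) * Nat.factorial (e + 6) ^ 2 := by ring
      _ ≤ (e + 6 + 1) ^ 2 * Nat.factorial (e + 6) ^ 2 :=
          Nat.mul_le_mul_right _ hkey
      _ = 2 * (((e + 6 + 1) * Nat.factorial (e + 6)) ^ 2) / 2 := by ring_nf; omega
      _ ≤ 2 * ((e + 6 + 1) * Nat.factorial (e + 6)) ^ 2 := Nat.div_le_self _ _

private lemma alpha_le (m : ℕ) (hm : 1 ≤ m) : 1 + alpha m ≤ m := by
  have hsub : m.primeFactors ⊆ Finset.Icc 2 m := by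
    intro p hp
    rw [Nat.mem_primeFactors] at hp
    rw [Finset.mem_Icc]
    exact ⟨hp.1.two_le, Nat.le_of_dvd (by omega) hp.2.1⟩
  have hcard : alpha m ≤ (Finset.Icc 2 m).card := Finset.card_le_card hsub
  rw [Nat.card_Icc] at hcard
  omega

/-- **Lemma 13 (2).** For `m ≥ 2`, `n > 10` with `n ≡ 2 (mod 4)`, and `a` the
smallest divisor of `n` greater than `2`,
`(1 + α(m))·(((n/a)!)^a·a!/2)^m ≤ (1/2^(m-1))·((n/2-1)!)²·((n/2)!)^(2m-2)` (over the reals). -/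
theorem imprimitive_bound_two_mod_four (m : ℕ) (hm : 2 ≤ m) (n : ℕ) (hn : 10 < n)
    (hn4 : n % 4 = 2)
    (a : ℕ) (ha : a ∣ n) (ha2 : 2 < a) (hamin : ∀ b : ℕ, b ∣ n → 2 < b → a ≤ b) :
    (1 + (alpha m : ℝ)) * (((Nat.factorial (n / a) : ℝ) ^ a * Nat.factorial a) / 2) ^ m ≤
      (1 / (2 : ℝ) ^ (m - 1)) * (Nat.factorial (n / 2 - 1) : ℝ) ^ 2 *
        (Nat.factorial (n / 2) : ℝ) ^ (2 * m - 2) := by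
  obtain ⟨j, rfl⟩ : ∃ j, m = j + 1 := ⟨m - 1, by omega⟩
  have hj1 : 1 ≤ j := by omega
  rw [show j + 1 - 1 = j by omega, show 2 * (j + 1) - 2 = 2 * j by omega]
  -- a is odd
  have haodd : a % 2 = 1 := by
    by_contra h
    obtain ⟨c, hc⟩ : 2 ∣ a := by omega
    have hcn : c ∣ n := dvd_trans ⟨2, by omega⟩ ha
    rcases Nat.lt_or_ge c 3 with h3 | h3
    · have ha4 : a = 4 := by omega
      obtain ⟨t, ht⟩ := ha
      rw [ha4] at ht
      omega
    · have := hamin c hcn (by omega)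
      omega
  obtain ⟨b, hb⟩ : ∃ b, b = n / a := ⟨_, rfl⟩
  rw [← hb]
  have hnab : a * b = n := by rw [hb]; exact Nat.mul_div_cancel' ha
  have hbeven : b % 2 = 0 := by
    have hne : Even n := Nat.even_iff.mpr (by omega)
    rw [← hnab] at hne
    rcases Nat.even_mul.mp hne with h | h
    · exact absurd (Nat.even_iff.mp h) (by omega)
    · exact Nat.even_iff.mp h
  have hb4 : b % 4 ≠ 0 := by
    intro h
    obtain ⟨t, ht⟩ : ∃ t, b = 4 * t := ⟨b / 4, by omega⟩
    have : n = 4 * (a * t) := by rw [← hnab, ht]; ring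
    omega
  have hb42 : b % 4 = 2 := by omega
  -- core inequality over ℕ
  have core : (Nat.factorial b) ^ a * Nat.factorial a ≤
      2 * (Nat.factorial (n / 2 - 1)) ^ 2 := by
    by_cases hb2 : b = 2
    · subst hb2
      have hn2a : n = 2 * a := by omega
      have ha7 : 7 ≤ a := by omega
      have hn2 : n / 2 = a := by omega
      obtain ⟨e, rfl⟩ : ∃ e, a = e + 7 := ⟨a - 7, by omega⟩
      rw [hn2, show e + 7 - 1 = e + 6 by omega,
        show Nat.factorial 2 = 2 from rfl]
      exact core_small e
    · have hb6 : 6 ≤ b := by omega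
      obtain ⟨d, hbd⟩ : ∃ d, b = 2 * d := ⟨b / 2, by omega⟩
      have hd3 : 3 ≤ d := by
        have : 10 < a * b := by omega
        omega
      have hn2 : n / 2 = a * d := by
        have h : n = 2 * (a * d) := by rw [← hnab, hbd]; ring
        omega
      rw [hn2, hbd]
      exact core_big a (by omega) d hd3
  -- pass to the reals
  have hcoreR : ((Nat.factorial b : ℝ)) ^ a * (Nat.factorial a : ℝ) ≤
      2 * ((Nat.factorial (n / 2 - 1) : ℝ)) ^ 2 := by exact_mod_cast core
  set A : ℝ := (Nat.factorial (n / 2 - 1) : ℝ) with hA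
  set B : ℝ := (Nat.factorial (n / 2) : ℝ) with hB
  set X : ℝ := ((Nat.factorial b : ℝ) ^ a * (Nat.factorial a : ℝ)) / 2 with hX
  have hX0 : 0 ≤ X := by positivity
  have hA0 : 0 ≤ A := by rw [hA]; positivity
  have hXA : X ≤ A ^ 2 := by rw [hX]; linarith
  have hXB : 4 * X ≤ B ^ 2 := by
    have hsucc : n / 2 - 1 + 1 = n / 2 := by omega
    have hBA : B = (↑(n / 2) : ℝ) * A := by
      rw [hB, hA, ← hsucc, Nat.factorial_succ]
      push_cast
      ring
    have h5 : (5 : ℝ) ≤ ((n / 2 : ℕ) : ℝ) := by exact_mod_cast (by omega : 5 ≤ n / 2)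
    calc 4 * X ≤ 4 * A ^ 2 := by linarith
      _ ≤ ((n / 2 : ℕ) : ℝ) ^ 2 * A ^ 2 := by
          have h25 : (25 : ℝ) ≤ ((n / 2 : ℕ) : ℝ) ^ 2 := by nlinarith
          nlinarith [sq_nonneg A, h25]
      _ = (((n / 2 : ℕ) : ℝ) * A) ^ 2 := by ring
      _ = B ^ 2 := by rw [hBA]
  have hαm : (1 + (alpha (j + 1) : ℝ)) ≤ 2 ^ j := by
    have h1 : 1 + alpha (j + 1) ≤ j + 1 := alpha_le (j + 1) (by omega)
    have h2 : j + 1 ≤ 2 ^ j := by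
      have := Nat.lt_two_pow_self (n := j)
      omega
    have h3 : ((1 + alpha (j + 1) : ℕ) : ℝ) ≤ ((2 ^ j : ℕ) : ℝ) := by
      exact_mod_cast h1.trans h2
    push_cast at h3
    linarith
  have hP : (0 : ℝ) < 2 ^ j := by positivity
  rw [show (1 / (2 : ℝ) ^ j) * A ^ 2 * B ^ (2 * j) =
      (A ^ 2 * B ^ (2 * j)) / 2 ^ j by ring, le_div_iff₀ hP]
  have hα0 : (0 : ℝ) ≤ 1 + (alpha (j + 1) : ℝ) := by positivity
  calc (1 + (alpha (j + 1) : ℝ)) * X ^ (j + 1) * 2 ^ j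
      ≤ 2 ^ j * X ^ (j + 1) * 2 ^ j := by
        have hnn : (0 : ℝ) ≤ X ^ (j + 1) * 2 ^ j := by positivity
        nlinarith
    _ = X * (4 * X) ^ j := by
        rw [mul_pow, show (4 : ℝ) = 2 * 2 by norm_num, mul_pow, pow_succ]
        ring
    _ ≤ A ^ 2 * (B ^ 2) ^ j := by
        have h4X : (0 : ℝ) ≤ 4 * X := by positivity
        exact mul_le_mul hXA (pow_le_pow_left₀ h4X hXB _) (by positivity) (by positivity)
    _ = A ^ 2 * B ^ (2 * j) := by rw [← pow_mul]
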